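/- There exists a constant C' ≥ 1, depending only on κ, such that the following holds (short-time regime, Lemma 2.4 (1)(ii)). Let d ≥ 1, κ > 1, U > 0, t > 0, x_min ∈ [0, (Ut)^{κ/(κ-1)}], and x ∈ ℝ^d with ‖x‖ ≥ (Ut)^{κ/(κ-1)}. Then every differentiable y : [0,t] → ℝ^d with y(0) = x and ‖y'(s)‖ ≤ U·(x_min + ‖y(s)‖)^{1/κ} for all s ∈ [0,t] satisfies ‖y(s) − x‖ ≤ C'·Ut·‖x‖^{1/κ} for all s ∈ [0,t]. -/

import Mathlib

/-- Lemma 2.4 (1)(ii), short-time regime: there is a constant `C' ≥ 1` depending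
only on `κ` such that any curve started at `x` with `‖x‖ ≥ (Ut)^{κ/(κ-1)}`, whose
speed is bounded by `U (x_min + ‖·‖)^{1/κ}` with small cut-off
`x_min ∈ [0, (Ut)^{κ/(κ-1)}]`, stays in the ball `B(x, C' Ut ‖x‖^{1/κ})`. -/
theorem short_time_regime_bound (κ : ℝ) (hκ : 1 < κ) :
    ∃ C' : ℝ, 1 ≤ C' ∧
      ∀ (d : ℕ), 1 ≤ d →
        ∀ U t xmin : ℝ, 0 < U → 0 < t →
          xmin ∈ Set.Icc (0 : ℝ) ((U * t) ^ (κ / (κ - 1))) →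
          ∀ x : EuclideanSpace ℝ (Fin d), (U * t) ^ (κ / (κ - 1)) ≤ ‖x‖ →
            ∀ y y' : ℝ → EuclideanSpace ℝ (Fin d), y 0 = x →
              (∀ s ∈ Set.Icc (0 : ℝ) t, HasDerivAt y (y' s) s) →
              (∀ s ∈ Set.Icc (0 : ℝ) t, ‖y' s‖ ≤ U * (xmin + ‖y s‖) ^ (1 / κ)) →
              ∀ s ∈ Set.Icc (0 : ℝ) t, ‖y s - x‖ ≤ C' * (U * t) * ‖x‖ ^ (1 / κ) := by
  have hκ0 : (0 : ℝ) < κ := lt_trans one_pos hκ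
  have hκ1 : (0 : ℝ) < κ - 1 := by linarith
  set C' : ℝ := (3 : ℝ) ^ (1 / (κ - 1)) with hC'def
  have hC1 : 1 < C' := Real.one_lt_rpow_iff_of_pos (by norm_num) |>.2
    (Or.inl ⟨by norm_num, by positivity⟩)
  -- key : (2 + C') ^ (1/κ) < C'
  have hCκ : C' ^ κ = 3 * C' := by
    rw [hC'def, ← Real.rpow_mul (by norm_num : (0:ℝ) ≤ 3),
      show 1 / (κ - 1) * κ = 1 + 1 / (κ - 1) by field_simp; ring,
      Real.rpow_add (by norm_num : (0:ℝ) < 3), Real.rpow_one]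
  have hkey : (2 + C') ^ (1 / κ) < C' := by
    have h1 : 2 + C' < C' ^ κ := by rw [hCκ]; linarith
    have h2 : (2 + C') ^ (1 / κ) < (C' ^ κ) ^ (1 / κ) :=
      Real.rpow_lt_rpow (by linarith) h1 (by positivity)
    calc (2 + C') ^ (1 / κ) < (C' ^ κ) ^ (1 / κ) := h2
      _ = C' := by
          rw [← Real.rpow_mul (by linarith), mul_one_div, div_self (ne_of_gt hκ0),
            Real.rpow_one]
  refine ⟨C', le_of_lt hC1, ?_⟩
  intro d _ U t xmin hU ht hxmin x hx y y' hy0 hderiv hbound s hs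
  have hUt : 0 < U * t := mul_pos hU ht
  have hxpos : 0 < ‖x‖ := lt_of_lt_of_le (Real.rpow_pos_of_pos hUt _) hx
  -- U * t ≤ ‖x‖ ^ ((κ-1)/κ), hence (U*t) * ‖x‖^(1/κ) ≤ ‖x‖
  have hUtx : U * t * ‖x‖ ^ (1 / κ) ≤ ‖x‖ := by
    have h1 : U * t ≤ ‖x‖ ^ ((κ - 1) / κ) := by
      have := Real.rpow_le_rpow (le_of_lt (Real.rpow_pos_of_pos hUt (κ / (κ - 1)))) hx
        (le_of_lt (show (0:ℝ) < (κ - 1) / κ by positivity))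
      rwa [← Real.rpow_mul (le_of_lt hUt),
        show κ / (κ - 1) * ((κ - 1) / κ) = 1 by field_simp,
        Real.rpow_one] at this
    calc U * t * ‖x‖ ^ (1 / κ) ≤ ‖x‖ ^ ((κ - 1) / κ) * ‖x‖ ^ (1 / κ) := by
          apply mul_le_mul_of_nonneg_right h1 (by positivity)
      _ = ‖x‖ := by
          rw [← Real.rpow_add hxpos]
          rw [show (κ - 1) / κ + 1 / κ = 1 by field_simp; ring]
          exact Real.rpow_one _
  -- set up the fencing theorem
  set a : ℝ := C' * U * ‖x‖ ^ (1 / κ) with hadef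
  have hapos : 0 < a := by
    apply mul_pos (mul_pos (by linarith) hU) (Real.rpow_pos_of_pos hxpos _)
  have hcont : ContinuousOn (fun s => y s - x) (Set.Icc 0 t) := fun u hu =>
    ((hderiv u hu).continuousAt.continuousWithinAt).sub continuousWithinAt_const
  have hB : ∀ u : ℝ, HasDerivAt (fun s : ℝ => a * s) a u := by
    intro u
    simpa using (hasDerivAt_id u).const_mul a
  have key : ∀ ⦃u⦄, u ∈ Set.Icc (0:ℝ) t → ‖y u - x‖ ≤ a * u := by
    apply image_norm_le_of_norm_deriv_right_lt_deriv_boundary hcont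
      (fun u hu => ((hderiv u (Set.mem_Icc_of_Ico hu)).sub_const x).hasDerivWithinAt)
      (by simp [hy0]) hB
    intro u hu heq
    have hu' : u ∈ Set.Icc (0:ℝ) t := Set.mem_Icc_of_Ico hu
    have hyu : ‖y u‖ ≤ ‖x‖ + a * u := by
      calc ‖y u‖ = ‖x + (y u - x)‖ := by rw [add_sub_cancel]
        _ ≤ ‖x‖ + ‖y u - x‖ := norm_add_le _ _
        _ = ‖x‖ + a * u := by rw [heq]
    have hau : a * u ≤ C' * ‖x‖ := by
      calc a * u ≤ a * t := by
            apply mul_le_mul_of_nonneg_left hu.2.le (le_of_lt hapos)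
        _ = C' * (U * t * ‖x‖ ^ (1 / κ)) := by ring
        _ ≤ C' * ‖x‖ := mul_le_mul_of_nonneg_left hUtx (by linarith)
    have hsum : xmin + ‖y u‖ ≤ (2 + C') * ‖x‖ := by
      have : xmin ≤ ‖x‖ := le_trans hxmin.2 hx
      nlinarith
    calc ‖y' u‖ ≤ U * (xmin + ‖y u‖) ^ (1 / κ) := hbound u hu'
      _ ≤ U * ((2 + C') * ‖x‖) ^ (1 / κ) := by
          apply mul_le_mul_of_nonneg_left _ hU.le
          exact Real.rpow_le_rpow (add_nonneg hxmin.1 (norm_nonneg _)) hsum (by positivity)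
      _ = U * ((2 + C') ^ (1 / κ) * ‖x‖ ^ (1 / κ)) := by
          rw [Real.mul_rpow (by linarith) (norm_nonneg x)]
      _ < U * (C' * ‖x‖ ^ (1 / κ)) := by
          apply mul_lt_mul_of_pos_left _ hU
          exact mul_lt_mul_of_pos_right hkey (Real.rpow_pos_of_pos hxpos _)
      _ = a := by rw [hadef]; ring
  calc ‖y s - x‖ ≤ a * s := key hs
    _ ≤ a * t := mul_le_mul_of_nonneg_left hs.2 hapos.le
    _ = C' * (U * t) * ‖x‖ ^ (1 / κ) := by rw [hadef]; ring
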